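/- Derivative-free OptimIST setup: let f : ℝⁿ → ℝ be differentiable with ∇f Lipschitz continuous on ℝⁿ with constant L ∈ (0,∞) and f bounded below with f_* = inf f; let η > 0, ζ > 0; let {x_k} ⊂ ℝⁿ, {ĝ_k} ⊂ ℝⁿ, {δ_k} ⊂ (0,∞) with f_k = f(x_k), g_k = ∇f(x_k), satisfying for every k ≥ 0: (i) f_{k+1} ≤ f_k; (ii) f_{k+1} ≤ max{f_k − ηδ_k², f(x_k − δ_k ĝ_k/‖ĝ_k‖)}, where ĝ_k/‖ĝ_k‖ is taken to be 0 if ĝ_k = 0; (iii) ‖ĝ_k − g_k‖ ≤ ζδ_k; (iv) δ_{k+1} = 2δ_k if both ‖ĝ_k‖ ≥ ηδ_k and f_{k+1} ≤ f_k − ηδ_k², and δ_{k+1} = δ_k/2 otherwise. Define K = {k ∈ ℕ : ‖ĝ_k‖ ≥ ηδ_k and f_{k+1} ≤ f_k − ηδ_k²}, μ = 2/(L + 2η + 4ζ), and, assuming g₀ ≠ 0, ν = min{δ₀/‖g₀‖, μ/2}. Then for every k ∈ K, f_k − f_{k+1} ≥ η δ_k² ≥ η ν² (min{‖g_ℓ‖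 : 0 ≤ ℓ ≤ k})². -/

import Mathlib

open Filter Topology

open scoped RealInnerProductSpace in
lemma descent_lemma {n : ℕ} (f : EuclideanSpace ℝ (Fin n) → ℝ)
    (hdiff : Differentiable ℝ f) (L : ℝ)
    (hlip : ∀ y z, ‖gradient f y - gradient f z‖ ≤ L * ‖y - z‖)
    (x v : EuclideanSpace ℝ (Fin n)) :
    f (x + v) ≤ f x + ⟪gradient f x, v⟫ + L / 2 * ‖v‖ ^ 2 := by
  have hg : ∀ t : ℝ, HasDerivAt (fun t : ℝ => f (x + t • v))
      ⟪gradient f (x + t • v), v⟫ t := by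
    intro t
    have h1 : HasDerivAt (fun t : ℝ => x + t • v) v t := by
      simpa using ((hasDerivAt_id t).smul_const v).const_add x
    have h2 := ((hdiff (x + t • v)).hasGradientAt.hasFDerivAt).comp_hasDerivAt t h1
    have h3 : HasDerivAt (fun t : ℝ => f (x + t • v)) ((InnerProductSpace.toDual ℝ (EuclideanSpace ℝ (Fin n))) (gradient f (x + t • v)) v) t := h2
    simpa using h3
  have hcontgrad : Continuous (gradient f) := by
    rcases le_or_gt L 0 with hL | hL
    · have : ∀ y z, gradient f y = gradient f z := by
        intro y z
        have := hlip y z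
        have h0 : L * ‖y - z‖ ≤ 0 := mul_nonpos_of_nonpos_of_nonneg hL (norm_nonneg _)
        have : ‖gradient f y - gradient f z‖ ≤ 0 := this.trans h0
        have := le_antisymm this (norm_nonneg _)
        rwa [norm_eq_zero, sub_eq_zero] at this
      exact continuous_const.congr fun y => (this y x).symm
    · exact (LipschitzWith.of_dist_le_mul (K := ⟨L, hL.le⟩) (by
        intro y z; rw [dist_eq_norm, dist_eq_norm]; exact hlip y z)).continuous
  have hcont : Continuous fun t : ℝ => ⟪gradient f (x + t • v), v⟫ :=
    (hcontgrad.comp (by continuity)).inner continuous_const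
  have key : f (x + v) - f x = ∫ t in (0:ℝ)..1, ⟪gradient f (x + t • v), v⟫ := by
    have := intervalIntegral.integral_eq_sub_of_hasDerivAt (a := 0) (b := 1)
      (fun t _ => hg t) (hcont.intervalIntegrable 0 1)
    simp only [one_smul, zero_smul, add_zero] at this
    linarith [this]
  have hbound : ∀ t ∈ Set.Icc (0:ℝ) 1,
      ⟪gradient f (x + t • v), v⟫ ≤ ⟪gradient f x, v⟫ + L * ‖v‖ ^ 2 * t := by
    intro t ht
    have h1 : ⟪gradient f (x + t • v) - gradient f x, v⟫ ≤ L * ‖v‖ ^ 2 * t := by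
      calc ⟪gradient f (x + t • v) - gradient f x, v⟫
          ≤ ‖gradient f (x + t • v) - gradient f x‖ * ‖v‖ := real_inner_le_norm _ _
        _ ≤ (L * ‖x + t • v - x‖) * ‖v‖ := by
            gcongr; exact hlip _ _
        _ = L * ‖v‖ ^ 2 * t := by
            have : x + t • v - x = t • v := by abel
            rw [this, norm_smul, Real.norm_eq_abs, abs_of_nonneg ht.1]
            ring
    have h2 : ⟪gradient f (x + t • v), v⟫
        = ⟪gradient f x, v⟫ + ⟪gradient f (x + t • v) - gradient f x, v⟫ := by
      rw [inner_sub_left]; ring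
    linarith
  have hint : (∫ t in (0:ℝ)..1, ⟪gradient f (x + t • v), v⟫)
      ≤ ∫ t in (0:ℝ)..1, (⟪gradient f x, v⟫ + L * ‖v‖ ^ 2 * t) := by
    apply intervalIntegral.integral_mono_on (by norm_num)
      (hcont.intervalIntegrable 0 1)
      ((continuous_const.add (continuous_const.mul continuous_id)).intervalIntegrable 0 1)
    exact hbound
  have hval : (∫ t in (0:ℝ)..1, (⟪gradient f x, v⟫ + L * ‖v‖ ^ 2 * t))
      = ⟪gradient f x, v⟫ + L / 2 * ‖v‖ ^ 2 := by
    have h1 : IntervalIntegrable (fun t : ℝ => L * ‖v‖ ^ 2 * t) MeasureTheory.volume 0 1 :=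
      (by continuity : Continuous fun t : ℝ => L * ‖v‖ ^ 2 * t).intervalIntegrable 0 1
    rw [intervalIntegral.integral_add intervalIntegrable_const h1,
      intervalIntegral.integral_const_mul, integral_id]
    simp
    ring
  linarith [key, hint.trans_eq hval]

/-- Inequality (3.5): at every successful iteration `k` of the derivative-free OptimIST
framework, `f (x k) - f (x (k+1)) ≥ η δ k ^ 2 ≥ η ν² (min {‖∇f (x ℓ)‖ : ℓ ≤ k})²`, where
`ν = min (δ 0 / ‖∇f (x 0)‖) (μ / 2)` and `μ = 2/(L + 2η + 4ζ)`. -/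
theorem successful_iteration_decrease {n : ℕ}
    (f : EuclideanSpace ℝ (Fin n) → ℝ)
    (hdiff : Differentiable ℝ f)
    (L : ℝ) (hL : 0 < L)
    (hlip : ∀ y z, ‖gradient f y - gradient f z‖ ≤ L * ‖y - z‖)
    (hbdd : BddBelow (Set.range f))
    (η ζ : ℝ) (hη : 0 < η) (hζ : 0 < ζ)
    (x ghat : ℕ → EuclideanSpace ℝ (Fin n)) (δ : ℕ → ℝ) (hδ : ∀ k, 0 < δ k)
    (hmono : ∀ k, f (x (k + 1)) ≤ f (x k))
    (hsd : ∀ k, f (x (k + 1)) ≤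
      max (f (x k) - η * δ k ^ 2) (f (x k - (δ k / ‖ghat k‖) • ghat k)))
    (hacc : ∀ k, ‖ghat k - gradient f (x k)‖ ≤ ζ * δ k)
    (hupd : ∀ k,
      ((η * δ k ≤ ‖ghat k‖ ∧ f (x (k + 1)) ≤ f (x k) - η * δ k ^ 2) → δ (k + 1) = 2 * δ k) ∧
      (¬(η * δ k ≤ ‖ghat k‖ ∧ f (x (k + 1)) ≤ f (x k) - η * δ k ^ 2) → δ (k + 1) = δ k / 2))
    (μ ν : ℝ) (hμ : μ = 2 / (L + 2 * η + 4 * ζ))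
    (hg0 : gradient f (x 0) ≠ 0)
    (hν : ν = min (δ 0 / ‖gradient f (x 0)‖) (μ / 2)) :
    ∀ k, (η * δ k ≤ ‖ghat k‖ ∧ f (x (k + 1)) ≤ f (x k) - η * δ k ^ 2) →
      η * δ k ^ 2 ≤ f (x k) - f (x (k + 1)) ∧
      η * ν ^ 2 * ((Finset.range (k + 1)).inf' (by simp)
        (fun ℓ => ‖gradient f (x ℓ)‖)) ^ 2 ≤ η * δ k ^ 2 := by
  have hden : 0 < L + 2 * η + 4 * ζ := by linarith
  have hμ0 : 0 < μ := by rw [hμ]; positivity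
  -- the minimal gradient norm
  set m : ℕ → ℝ := fun k => (Finset.range (k + 1)).inf' (by simp)
    (fun ℓ => ‖gradient f (x ℓ)‖) with hm
  have hmle : ∀ k ℓ, ℓ ≤ k → m k ≤ ‖gradient f (x ℓ)‖ := by
    intro k ℓ hℓ
    exact Finset.inf'_le _ (Finset.mem_range.mpr (Nat.lt_succ_of_le hℓ))
  have hmnonneg : ∀ k, 0 ≤ m k :=
    fun k => Finset.le_inf' _ _ (fun b _ => norm_nonneg _)
  have hmmono : ∀ k, m (k + 1) ≤ m k := by
    intro k
    exact Finset.inf'_mono _ (Finset.range_subset_range.mpr (by omega)) (by simp)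
  have hg0pos : 0 < ‖gradient f (x 0)‖ := norm_pos_iff.mpr hg0
  have hν0 : 0 < ν := by
    rw [hν]
    exact lt_min (div_pos (hδ 0) hg0pos) (by linarith)
  -- key success lemma
  have hsucc : ∀ k, δ k ≤ μ * ‖gradient f (x k)‖ →
      (η * δ k ≤ ‖ghat k‖ ∧ f (x (k + 1)) ≤ f (x k) - η * δ k ^ 2) := by
    intro k hk
    set gk := gradient f (x k) with hgk
    set dk := δ k with hdk
    have hdk0 : 0 < dk := hδ k
    have hgkn : dk * (L + 2 * η + 4 * ζ) / 2 ≤ ‖gk‖ := by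
      rw [hμ, div_mul_eq_mul_div, le_div_iff₀ hden] at hk
      linarith
    have hghat : (L / 2 + η + ζ) * dk ≤ ‖ghat k‖ := by
      have h1 : ‖gk‖ - ‖ghat k‖ ≤ ‖ghat k - gk‖ := by
        have := norm_sub_norm_le (ghat k) gk
        linarith [abs_le.mp (abs_norm_sub_norm_le (ghat k) gk)]
      have := hacc k
      linarith
    have hghat0 : 0 < ‖ghat k‖ := lt_of_lt_of_le (by positivity) hghat
    have hηd : η * dk ≤ ‖ghat k‖ := by nlinarith
    refine ⟨hηd, ?_⟩
    -- sufficient decrease via the descent lemma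
    have hdesc := descent_lemma f hdiff L hlip (x k) (-((dk / ‖ghat k‖) • ghat k))
    have hxe : x k + -((dk / ‖ghat k‖) • ghat k) = x k - (dk / ‖ghat k‖) • ghat k := by
      abel
    rw [hxe] at hdesc
    have hnv : ‖-((dk / ‖ghat k‖) • ghat k)‖ = dk := by
      rw [norm_neg, norm_smul, Real.norm_eq_abs, abs_of_nonneg (by positivity)]
      field_simp
    have hip : @inner ℝ _ _ gk (-((dk / ‖ghat k‖) • ghat k)) ≤ -dk * ‖ghat k‖ + ζ * dk ^ 2 := by
      have h1 : @inner ℝ _ _ gk (ghat k) = ‖ghat k‖ ^ 2 - @inner ℝ _ _ (ghat k - gk) (ghat k) := by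
        rw [inner_sub_left, real_inner_self_eq_norm_sq]; ring
      have h2 : @inner ℝ _ _ (ghat k - gk) (ghat k) ≤ ζ * dk * ‖ghat k‖ := by
        calc @inner ℝ _ _ (ghat k - gk) (ghat k) ≤ ‖ghat k - gk‖ * ‖ghat k‖ :=
              real_inner_le_norm _ _
          _ ≤ ζ * dk * ‖ghat k‖ := by gcongr; exact hacc k
      have h3 : ‖ghat k‖ ^ 2 - ζ * dk * ‖ghat k‖ ≤ @inner ℝ _ _ gk (ghat k) := by
        rw [h1]; linarith
      have h4 : @inner ℝ _ _ gk (-((dk / ‖ghat k‖) • ghat k))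
          = -(dk / ‖ghat k‖) * @inner ℝ _ _ gk (ghat k) := by
        rw [inner_neg_right, real_inner_smul_right]; ring
      rw [h4]
      have h5 : -(dk / ‖ghat k‖) * @inner ℝ _ _ gk (ghat k)
          ≤ -(dk / ‖ghat k‖) * (‖ghat k‖ ^ 2 - ζ * dk * ‖ghat k‖) := by
        exact mul_le_mul_of_nonpos_left h3 (neg_nonpos.mpr (by positivity))
      have h6 : -(dk / ‖ghat k‖) * (‖ghat k‖ ^ 2 - ζ * dk * ‖ghat k‖)
          = -dk * ‖ghat k‖ + ζ * dk ^ 2 := by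
        field_simp; ring
      linarith
    have hstep : f (x k - (dk / ‖ghat k‖) • ghat k) ≤ f (x k) - η * dk ^ 2 := by
      rw [hnv] at hdesc
      nlinarith [hdesc, hip, hghat]
    exact (hsd k).trans (max_le le_rfl hstep)
  -- main induction: ν * m k ≤ δ k
  have hind : ∀ k, ν * m k ≤ δ k := by
    intro k
    induction k with
    | zero =>
        have hm0 : m 0 = ‖gradient f (x 0)‖ := by
          simp [hm]
        rw [hm0]
        have h1 : ν ≤ δ 0 / ‖gradient f (x 0)‖ := hν ▸ min_le_left _ _
        calc ν * ‖gradient f (x 0)‖ ≤ (δ 0 / ‖gradient f (x 0)‖) * ‖gradient f (x 0)‖ := by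
              gcongr
          _ = δ 0 := by field_simp
    | succ k ih =>
        by_cases hs : (η * δ k ≤ ‖ghat k‖ ∧ f (x (k + 1)) ≤ f (x k) - η * δ k ^ 2)
        · have hd : δ (k + 1) = 2 * δ k := (hupd k).1 hs
          have : ν * m (k + 1) ≤ ν * m k := by
            apply mul_le_mul_of_nonneg_left (hmmono k) hν0.le
          linarith [hδ k]
        · have hd : δ (k + 1) = δ k / 2 := (hupd k).2 hs
          have hfail : μ * ‖gradient f (x k)‖ < δ k := by
            by_contra h
            exact hs (hsucc k (not_lt.mp h))
          have h1 : m (k + 1) ≤ ‖gradient f (x k)‖ := hmle (k + 1) k (by omega)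
          have h2 : ν ≤ μ / 2 := hν ▸ min_le_right _ _
          calc ν * m (k + 1) ≤ ν * ‖gradient f (x k)‖ :=
                mul_le_mul_of_nonneg_left h1 hν0.le
            _ ≤ (μ / 2) * ‖gradient f (x k)‖ := by gcongr
            _ = (μ * ‖gradient f (x k)‖) / 2 := by ring
            _ ≤ δ k / 2 := by linarith
            _ = δ (k + 1) := hd.symm
  -- conclusion
  intro k hk
  refine ⟨by linarith [hk.2], ?_⟩
  have h1 : ν * m k ≤ δ k := hind k
  have h2 : 0 ≤ ν * m k := mul_nonneg hν0.le (hmnonneg k)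
  have h3 : (ν * m k) ^ 2 ≤ (δ k) ^ 2 := by
    apply pow_le_pow_left₀ h2 h1
  calc η * ν ^ 2 * ((Finset.range (k + 1)).inf' (by simp)
        (fun ℓ => ‖gradient f (x ℓ)‖)) ^ 2 = η * (ν * m k) ^ 2 := by rw [hm]; ring
    _ ≤ η * δ k ^ 2 := by gcongr
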